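/- For all integers m ≥ 1 and odd n = 2k+1 ≥ 1 with m + n ≥ 3, the spider Sp(1^[m], 2^[n]) admits a local antimagic total labeling f : V ∪ E → {1,...,2m+8k+5} with exactly 3 distinct vertex weights, namely w(u_j) = 9k+6 for all j, w(y_i) = w(v_j) = 2m + 12k + 7 for all i, j, and w(x) = m(m+12k+7)/2 + 2m + 2k² + 11k + 6. -/

import Mathlib

open Finset

variable {V : Type*} [Fintype V] [DecidableEq V]

/-- The weight of a vertex `u` under the total labeling given by vertex labels `fv`
and edge labels `fe` : `w(u) = f(u) + \sum_{e incident to u} f(e)`. -/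
def latWeight (G : SimpleGraph V) [DecidableRel G.Adj]
    (fv : V → ℕ) (fe : Sym2 V → ℕ) (u : V) : ℕ :=
  fv u + ∑ v ∈ G.neighborFinset u, fe s(u, v)

/-- `fv, fe` together form a bijection from `V(G) ∪ E(G)` onto `{1, …, p + q}`,
where `p` is the order and `q` is the size of `G`. -/
def IsTotalLabeling (G : SimpleGraph V) [DecidableRel G.Adj]
    (fv : V → ℕ) (fe : Sym2 V → ℕ) : Prop :=
  Set.BijOn (Sum.elim fv (fun e : G.edgeSet => fe (e : Sym2 V))) Set.univ
    (Set.Icc 1 (Fintype.card V + G.edgeFinset.card))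

/-- A local antimagic total labeling of `G` : a bijective total labeling such that any two
adjacent vertices get distinct weights. -/
def IsLocalAntimagicTotal (G : SimpleGraph V) [DecidableRel G.Adj]
    (fv : V → ℕ) (fe : Sym2 V → ℕ) : Prop :=
  IsTotalLabeling G fv fe ∧
    ∀ ⦃u v : V⦄, G.Adj u v → latWeight G fv fe u ≠ latWeight G fv fe v

/-- The local antimagic total chromatic number `χ_lat(G)` : the minimum number of distinct
vertex weights taken over all local antimagic total labelings of `G`. -/
noncomputable def chiLat (G : SimpleGraph V) [DecidableRel G.Adj] : ℕ :=
  sInf {c | ∃ fv fe, IsLocalAntimagicTotal G fv fe ∧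
    (Finset.univ.image (latWeight G fv fe)).card = c}

instance {W : Type*} (r : W → W → Prop) [DecidableEq W] [DecidableRel r] :
    DecidableRel (SimpleGraph.fromRel r).Adj :=
  fun a b => decidable_of_iff _ (SimpleGraph.fromRel_adj r a b).symm

/-- Adjacency for the spider `Sp(1^[m], 2^[n])` : the center `x = none` is adjacent to each
leaf `y i = some (Sum.inl i)` and to each `u j = some (Sum.inr (j, false))`, and each `u j`
is adjacent to the leaf `v j = some (Sum.inr (j, true))`. -/
def spider12R (m n : ℕ) :
    Option (Fin m ⊕ Fin n × Bool) → Option (Fin m ⊕ Fin n × Bool) → Bool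
  | none, some (Sum.inl _) => true
  | none, some (Sum.inr (_, false)) => true
  | some (Sum.inr (j, false)), some (Sum.inr (j', true)) => decide (j = j')
  | _, _ => false

/-- The spider `Sp(1^[m], 2^[n])` with `m` legs of length `1` and `n` legs of length `2`. -/
abbrev spider12 (m n : ℕ) : SimpleGraph (Option (Fin m ⊕ Fin n × Bool)) :=
  SimpleGraph.fromRel (fun a b => spider12R m n a b = true)


section SpiderConstruction

def sphi (m n : ℕ) : (Fin m ⊕ Fin n × Bool) → Sym2 (Option (Fin m ⊕ Fin n × Bool))
  | Sum.inl i => s(none, some (Sum.inl i))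
  | Sum.inr (j, false) => s(none, some (Sum.inr (j, false)))
  | Sum.inr (j, true) => s(some (Sum.inr (j, false)), some (Sum.inr (j, true)))

variable {m n : ℕ}

lemma edge_cases (e : Sym2 (Option (Fin m ⊕ Fin n × Bool)))
    (he : e ∈ (spider12 m n).edgeSet) :
    (∃ i : Fin m, e = s(none, some (Sum.inl i))) ∨
    (∃ j : Fin n, e = s(none, some (Sum.inr (j, false)))) ∨
    (∃ j : Fin n, e = s(some (Sum.inr (j, false)), some (Sum.inr (j, true)))) := by
  induction e with
  | _ a b =>
    rw [SimpleGraph.mem_edgeSet] at he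
    rcases a with _ | (i | ⟨j, _ | _⟩) <;> rcases b with _ | (i' | ⟨j', _ | _⟩) <;>
      simp_all [SimpleGraph.fromRel_adj, spider12R, Sym2.eq_swap]

lemma edgeFinset_eq : (spider12 m n).edgeFinset = univ.image (sphi m n) := by
  ext e
  simp only [SimpleGraph.mem_edgeFinset, mem_image, mem_univ, true_and]
  constructor
  · intro he
    rcases edge_cases e he with ⟨i, rfl⟩ | ⟨j, rfl⟩ | ⟨j, rfl⟩
    exacts [⟨Sum.inl i, rfl⟩, ⟨Sum.inr (j, false), rfl⟩, ⟨Sum.inr (j, true), rfl⟩]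
  · rintro ⟨w, rfl⟩
    rcases w with i | ⟨j, _ | _⟩ <;>
      simp [sphi, SimpleGraph.mem_edgeFinset, SimpleGraph.fromRel_adj, spider12R]

lemma sphi_inj : Function.Injective (sphi m n) := by
  rintro (i | ⟨j, _ | _⟩) (i' | ⟨j', _ | _⟩) h <;>
    simp_all [sphi, Sym2.eq, Sym2.rel_iff]

lemma card_edgeFinset : (spider12 m n).edgeFinset.card = m + 2 * n := by
  rw [edgeFinset_eq, card_image_of_injective _ sphi_inj]
  simp [Fintype.card_sum, Fintype.card_prod]
  ring

def sCC (k j : ℕ) : ℕ := if j ≤ k then 2*k - 2*j else 4*k+1 - 2*j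
def sBB (k j : ℕ) : ℕ := if j ≤ k then k + j else j - (k+1)

def sFV (m k : ℕ) : Option (Fin m ⊕ Fin (2*k+1) × Bool) → ℕ
  | none => 2*m+8*k+5
  | some (Sum.inl i) => 2*m+6*k+3 - i
  | some (Sum.inr (j, false)) => 2*k+2 + sBB k j
  | some (Sum.inr (j, true)) => 2*m+8*k+4 - sCC k j

def sH (m k : ℕ) :
    Option (Fin m ⊕ Fin (2*k+1) × Bool) → Option (Fin m ⊕ Fin (2*k+1) × Bool) → ℕ
  | none, some (Sum.inl i) => 6*k+4 + i
  | none, some (Sum.inr (j, false)) => j + 1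
  | some (Sum.inr (j, false)), some (Sum.inr (j', true)) =>
      if j = j' then 4*k+3 + sCC k j else 0
  | _, _ => 0

def sFE (m k : ℕ) : Sym2 (Option (Fin m ⊕ Fin (2*k+1) × Bool)) → ℕ :=
  Sym2.lift ⟨fun a b => sH m k a b + sH m k b a, fun a b => add_comm _ _⟩

variable {m k : ℕ}

lemma sFE_y (i : Fin m) : sFE m k s(none, some (Sum.inl i)) = 6*k+4 + i := by
  simp [sFE, sH]

lemma sFE_xu (j : Fin (2*k+1)) : sFE m k s(none, some (Sum.inr (j, false))) = j + 1 := by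
  simp [sFE, sH]

lemma sFE_uv (j : Fin (2*k+1)) :
    sFE m k s(some (Sum.inr (j, false)), some (Sum.inr (j, true))) = 4*k+3 + sCC k j := by
  simp [sFE, sH]

lemma sCC_lt (j : Fin (2*k+1)) : sCC k j ≤ 2*k := by
  have := j.2; unfold sCC; split <;> omega

lemma sBB_lt (j : Fin (2*k+1)) : sBB k j ≤ 2*k := by
  have := j.2; unfold sBB; split <;> omega

lemma sBB_add_sCC (j : Fin (2*k+1)) : sBB k j + sCC k j + j = 3*k := by
  have := j.2; unfold sBB sCC; split <;> omega

lemma sCC_inj (j j' : Fin (2*k+1)) (h : sCC k j = sCC k j') : j = j' := by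
  have h1 := j.2; have h2 := j'.2
  unfold sCC at h; apply Fin.ext; split at h <;> split at h <;> omega

variable {m k : ℕ}

lemma nbr_y (i : Fin m) : (spider12 m (2*k+1)).neighborFinset (some (Sum.inl i)) = {none} := by
  ext b
  rcases b with _ | (i' | ⟨j', _ | _⟩) <;>
    simp [SimpleGraph.mem_neighborFinset, SimpleGraph.fromRel_adj, spider12R, eq_comm]

lemma nbr_v (j : Fin (2*k+1)) : (spider12 m (2*k+1)).neighborFinset (some (Sum.inr (j, true))) =
    {some (Sum.inr (j, false))} := by
  ext b
  rcases b with _ | (i | ⟨j', _ | _⟩) <;>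
    simp [SimpleGraph.mem_neighborFinset, SimpleGraph.fromRel_adj, spider12R, eq_comm]

lemma nbr_u (j : Fin (2*k+1)) : (spider12 m (2*k+1)).neighborFinset (some (Sum.inr (j, false))) =
    {none, some (Sum.inr (j, true))} := by
  ext b
  rcases b with _ | (i' | ⟨j', _ | _⟩) <;>
    simp [SimpleGraph.mem_neighborFinset, SimpleGraph.fromRel_adj, spider12R, eq_comm]

lemma nbr_x : (spider12 m (2*k+1)).neighborFinset none =
    (univ.image fun i : Fin m => some (Sum.inl i)) ∪
    (univ.image fun j : Fin (2*k+1) => some (Sum.inr (j, false))) := by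
  ext b
  rcases b with _ | (i' | ⟨j', _ | _⟩) <;>
    simp [SimpleGraph.mem_neighborFinset, SimpleGraph.fromRel_adj, spider12R]


lemma w_y (i : Fin m) : latWeight (spider12 m (2*k+1)) (sFV m k) (sFE m k)
    (some (Sum.inl i)) = 2*m + 12*k + 7 := by
  have hi := i.2
  rw [latWeight, nbr_y, sum_singleton]
  simp [sFV, sFE, sH]
  omega

lemma w_v (j : Fin (2*k+1)) : latWeight (spider12 m (2*k+1)) (sFV m k) (sFE m k)
    (some (Sum.inr (j, true))) = 2*m + 12*k + 7 := by
  have := sCC_lt j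
  rw [latWeight, nbr_v, sum_singleton]
  simp [sFV, sFE, sH]
  omega

lemma w_u (j : Fin (2*k+1)) : latWeight (spider12 m (2*k+1)) (sFV m k) (sFE m k)
    (some (Sum.inr (j, false))) = 9*k + 6 := by
  have h1 := sBB_add_sCC j
  rw [latWeight, nbr_u]
  rw [sum_insert (by simp), sum_singleton]
  simp [sFV, sFE, sH]
  omega

lemma w_x (hm : 1 ≤ m) : 2 * latWeight (spider12 m (2*k+1)) (sFV m k) (sFE m k) none =
    m * (m + 12*k + 7) + 2*(2*m + 2*k^2 + 11*k + 6) := by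
  rw [latWeight, nbr_x, sum_union]
  · rw [sum_image (by simp; intro a b h; simpa using h), sum_image (by simp; intro a b h; simpa using h)]
    have h1 : ∀ i : Fin m, sFE m k s(none, some (Sum.inl i)) = 6*k+4 + (i:ℕ) := sFE_y
    have h2 : ∀ j : Fin (2*k+1), sFE m k s(none, some (Sum.inr (j, false))) = (j:ℕ) + 1 := sFE_xu
    simp only [h1, h2, sum_add_distrib, sum_const, card_univ, Fintype.card_fin, smul_eq_mul]
    have g1 : (∑ i : Fin m, (i:ℕ)) * 2 = m * (m-1) := by
      rw [Fin.sum_univ_eq_sum_range (fun i => i) m]; exact Finset.sum_range_id_mul_two m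
    have g2 : (∑ j : Fin (2*k+1), (j:ℕ)) * 2 = (2*k+1) * (2*k) := by
      rw [Fin.sum_univ_eq_sum_range (fun i => i) (2*k+1)]
      simpa using Finset.sum_range_id_mul_two (2*k+1)
    obtain ⟨m', rfl⟩ : ∃ m', m = m' + 1 := ⟨m-1, by omega⟩
    simp only [Nat.add_sub_cancel] at g1
    simp [sFV]
    nlinarith [g1, g2]
  · rw [disjoint_left]
    rintro a ha hb
    simp at ha hb
    obtain ⟨i, rfl⟩ := ha
    obtain ⟨j, h⟩ := hb
    simp at h

lemma sBB_le {j : ℕ} (hj : j < 2*k+1) : sBB k j ≤ 2*k := by unfold sBB; split <;> omega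
lemma sCC_le {j : ℕ} (hj : j < 2*k+1) : sCC k j ≤ 2*k := by unfold sCC; split <;> omega
lemma sBB_inj_nat {j j' : ℕ} (hj : j < 2*k+1) (hj' : j' < 2*k+1)
    (h : sBB k j = sBB k j') : j = j' := by
  unfold sBB at h; split at h <;> split at h <;> omega
lemma sCC_inj_nat {j j' : ℕ} (hj : j < 2*k+1) (hj' : j' < 2*k+1)
    (h : sCC k j = sCC k j') : j = j' := by
  unfold sCC at h; split at h <;> split at h <;> omega

lemma label_inj :
    Function.Injective (Sum.elim (sFV m k)
      (fun e : (spider12 m (2*k+1)).edgeSet => sFE m k (e : Sym2 _))) := by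
  rintro (v | ⟨e, he⟩) (w | ⟨e', he'⟩) h
  ·
    rcases v with _ | (⟨i, hi⟩ | ⟨⟨j, hj⟩, _ | _⟩) <;>
      rcases w with _ | (⟨i', hi'⟩ | ⟨⟨j', hj'⟩, _ | _⟩) <;>
    simp only [Sum.elim_inl, sFV, Fin.val_mk] at h <;>
    simp only [Sum.inl.injEq, Option.some.injEq, Sum.inr.injEq, Prod.mk.injEq,
      Fin.mk.injEq, and_true, reduceCtorEq] <;>
    (try have b1 : sBB k j ≤ 2*k := sBB_le hj) <;>
    (try have b2 : sBB k j' ≤ 2*k := sBB_le hj') <;>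
    (try have c1 : sCC k j ≤ 2*k := sCC_le hj) <;>
    (try have c2 : sCC k j' ≤ 2*k := sCC_le hj') <;>
    first
      | rfl
      | omega
      | exact sBB_inj_nat hj hj' (by omega)
      | exact sCC_inj_nat hj hj' (by omega)
  ·
    exfalso
    rcases edge_cases e' he' with ⟨⟨i', hi'⟩, rfl⟩ | ⟨⟨j', hj'⟩, rfl⟩ | ⟨⟨j', hj'⟩, rfl⟩ <;>
    rcases v with _ | (⟨i, hi⟩ | ⟨⟨j, hj⟩, _ | _⟩) <;>
    simp only [Sum.elim_inl, Sum.elim_inr, sFV, sFE_y, sFE_xu, sFE_uv, Fin.val_mk] at h <;>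
    (try have b1 : sBB k j ≤ 2*k := sBB_le hj) <;>
    (try have c1 : sCC k j ≤ 2*k := sCC_le hj) <;>
    (try have c2 : sCC k j' ≤ 2*k := sCC_le hj') <;>
    omega
  ·
    exfalso
    rcases edge_cases e he with ⟨⟨i, hi⟩, rfl⟩ | ⟨⟨j, hj⟩, rfl⟩ | ⟨⟨j, hj⟩, rfl⟩ <;>
    rcases w with _ | (⟨i', hi'⟩ | ⟨⟨j', hj'⟩, _ | _⟩) <;>
    simp only [Sum.elim_inl, Sum.elim_inr, sFV, sFE_y, sFE_xu, sFE_uv, Fin.val_mk] at h <;>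
    (try have b2 : sBB k j' ≤ 2*k := sBB_le hj') <;>
    (try have c1 : sCC k j ≤ 2*k := sCC_le hj) <;>
    (try have c2 : sCC k j' ≤ 2*k := sCC_le hj') <;>
    omega
  ·
    rcases edge_cases e he with ⟨⟨i, hi⟩, rfl⟩ | ⟨⟨j, hj⟩, rfl⟩ | ⟨⟨j, hj⟩, rfl⟩ <;>
    rcases edge_cases e' he' with ⟨⟨i', hi'⟩, rfl⟩ | ⟨⟨j', hj'⟩, rfl⟩ | ⟨⟨j', hj'⟩, rfl⟩ <;>
    simp only [Sum.elim_inr, sFE_y, sFE_xu, sFE_uv, Fin.val_mk] at h <;>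
    (try have c1 : sCC k j ≤ 2*k := sCC_le hj) <;>
    (try have c2 : sCC k j' ≤ 2*k := sCC_le hj')
    · have hh : i = i' := by omega
      subst hh; rfl
    · exact absurd h (by omega)
    · exact absurd h (by omega)
    · exact absurd h (by omega)
    · have hh : j = j' := by omega
      subst hh; rfl
    · exact absurd h (by omega)
    · exact absurd h (by omega)
    · exact absurd h (by omega)
    · have hh : j = j' := sCC_inj_nat hj hj' (by omega)
      subst hh; rfl

lemma label_mem (a : Option (Fin m ⊕ Fin (2*k+1) × Bool) ⊕ (spider12 m (2*k+1)).edgeSet) :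
    Sum.elim (sFV m k) (fun e : (spider12 m (2*k+1)).edgeSet => sFE m k (e : Sym2 _)) a ∈
      Set.Icc 1 (2*m+8*k+5) := by
  rcases a with v | ⟨e, he⟩
  · rcases v with _ | (⟨i, hi⟩ | ⟨⟨j, hj⟩, _ | _⟩) <;>
      simp only [Sum.elim_inl, sFV, Fin.val_mk, Set.mem_Icc] <;>
      (try have b1 : sBB k j ≤ 2*k := sBB_le hj) <;>
      (try have c1 : sCC k j ≤ 2*k := sCC_le hj) <;>
      omega
  · rcases edge_cases e he with ⟨⟨i, hi⟩, rfl⟩ | ⟨⟨j, hj⟩, rfl⟩ | ⟨⟨j, hj⟩, rfl⟩ <;>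
      simp only [Sum.elim_inr, sFE_y, sFE_xu, sFE_uv, Fin.val_mk, Set.mem_Icc] <;>
      (try have c1 : sCC k j ≤ 2*k := sCC_le hj) <;>
      omega

lemma card_total : Fintype.card (Option (Fin m ⊕ Fin (2*k+1) × Bool)) +
    (spider12 m (2*k+1)).edgeFinset.card = 2*m+8*k+5 := by
  rw [card_edgeFinset]
  simp [Fintype.card_option, Fintype.card_sum, Fintype.card_prod]
  omega

lemma label_bijOn :
    Set.BijOn (Sum.elim (sFV m k)
        (fun e : (spider12 m (2*k+1)).edgeSet => sFE m k (e : Sym2 _)))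
      Set.univ (Set.Icc 1 (2*m+8*k+5)) := by
  set L := Sum.elim (sFV m k)
      (fun e : (spider12 m (2*k+1)).edgeSet => sFE m k (e : Sym2 _)) with hL
  have hinj : Function.Injective L := label_inj
  refine ⟨fun a _ => label_mem a, hinj.injOn, ?_⟩
  have himg : L '' Set.univ ⊆ Set.Icc 1 (2*m+8*k+5) := by
    rintro t ⟨a, _, rfl⟩; exact label_mem a
  have hcard : (Set.Icc 1 (2*m+8*k+5) : Set ℕ).ncard ≤ (L '' Set.univ).ncard := by
    rw [Set.ncard_image_of_injective _ hinj, Set.ncard_univ, Nat.card_eq_fintype_card,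
      Fintype.card_sum]
    have h2 : (Set.Icc 1 (2*m+8*k+5) : Set ℕ) = ↑(Finset.Icc 1 (2*m+8*k+5)) := by simp
    rw [h2, Set.ncard_coe_finset, Nat.card_Icc]
    have h3 : Fintype.card (spider12 m (2*k+1)).edgeSet =
        (spider12 m (2*k+1)).edgeFinset.card := (Set.toFinset_card _).symm
    have := @card_total m k
    omega
  have heq : L '' Set.univ = Set.Icc 1 (2*m+8*k+5) :=
    Set.eq_of_subset_of_ncard_le himg hcard (Set.finite_Icc _ _)
  exact heq.symm.subset

lemma wx_lb (hm : 1 ≤ m) :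
    4*m + 24*k + 15 ≤ 2 * latWeight (spider12 m (2*k+1)) (sFV m k) (sFE m k) none := by
  rw [w_x hm]
  nlinarith

end SpiderConstruction

/-- For all `m ≥ 1` and odd `n = 2k+1 ≥ 1` with `m + n ≥ 3`, the spider `Sp(1^[m], 2^[n])`
admits a local antimagic total labeling (into `{1, …, 2m+8k+5}`) with exactly `3` distinct
vertex weights, namely `w(u_j) = 9k + 6`, `w(y_i) = w(v_j) = 2m + 12k + 7` and
`w(x) = m(m+12k+7)/2 + 2m + 2k² + 11k + 6` (stated multiplied by `2` to avoid division). -/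
theorem spider12_odd_three_weights (m k : ℕ) (hm : 1 ≤ m) (hmn : 3 ≤ m + (2 * k + 1)) :
    ∃ fv fe, IsLocalAntimagicTotal (spider12 m (2 * k + 1)) fv fe ∧
      (Finset.univ.image (latWeight (spider12 m (2 * k + 1)) fv fe)).card = 3 ∧
      (∀ j : Fin (2 * k + 1),
        latWeight (spider12 m (2 * k + 1)) fv fe (some (Sum.inr (j, false))) = 9 * k + 6) ∧
      (∀ i : Fin m,
        latWeight (spider12 m (2 * k + 1)) fv fe (some (Sum.inl i)) = 2 * m + 12 * k + 7) ∧
      (∀ j : Fin (2 * k + 1),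
        latWeight (spider12 m (2 * k + 1)) fv fe (some (Sum.inr (j, true))) =
          2 * m + 12 * k + 7) ∧
      2 * latWeight (spider12 m (2 * k + 1)) fv fe none =
        m * (m + 12 * k + 7) + 2 * (2 * m + 2 * k ^ 2 + 11 * k + 6) := by
  refine ⟨sFV m k, sFE m k, ⟨?_, ?_⟩, ?_, fun j => w_u j, fun i => w_y i,
    fun j => w_v j, w_x hm⟩
  · unfold IsTotalLabeling
    rw [card_total]
    exact label_bijOn
  · intro u v huv
    have hx := wx_lb (m := m) (k := k) hm
    rcases u with _ | (i | ⟨j, _ | _⟩) <;> rcases v with _ | (i' | ⟨j', _ | _⟩) <;>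
      simp only [SimpleGraph.fromRel_adj, spider12R, ne_eq, decide_eq_true_eq, false_or,
        or_false, and_true, true_and, Bool.false_eq_true, and_false, or_self] at huv
    · rw [w_y i']; omega
    · rw [w_u j']; omega
    · rw [w_y i]; omega
    · rw [w_u j]; omega
    · rw [w_u j, w_v j']; omega
    · rw [w_v j, w_u j']; omega
  · have himg : (univ.image (latWeight (spider12 m (2*k+1)) (sFV m k) (sFE m k))) =
        {latWeight (spider12 m (2*k+1)) (sFV m k) (sFE m k) none, 2*m+12*k+7, 9*k+6} := by
      apply Finset.Subset.antisymm
      · intro t ht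
        simp only [mem_image, mem_univ, true_and] at ht
        obtain ⟨v, rfl⟩ := ht
        rcases v with _ | (i | ⟨j, _ | _⟩)
        · exact mem_insert_self _ _
        · rw [w_y i]; simp
        · rw [w_u j]; simp
        · rw [w_v j]; simp
      · intro t ht
        simp only [mem_insert, mem_singleton] at ht
        simp only [mem_image, mem_univ, true_and]
        rcases ht with rfl | rfl | rfl
        · exact ⟨none, rfl⟩
        · exact ⟨some (Sum.inl ⟨0, hm⟩), w_y _⟩
        · exact ⟨some (Sum.inr (⟨0, by omega⟩, false)), w_u _⟩
    have hx := wx_lb (m := m) (k := k) hm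
    have hne1 : latWeight (spider12 m (2*k+1)) (sFV m k) (sFE m k) none ∉
        ({2*m+12*k+7, 9*k+6} : Finset ℕ) := by
      simp only [mem_insert, mem_singleton]
      push_neg
      constructor <;> omega
    have hne2 : (2*m+12*k+7 : ℕ) ∉ ({9*k+6} : Finset ℕ) := by
      simp only [mem_singleton]; omega
    rw [himg, card_insert_of_notMem hne1, card_insert_of_notMem hne2, card_singleton]
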